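/- Let C be a nonempty compact convex subset of a real Hilbert space H and let T : C → C be nonexpansive. For ε > 0, let F_ε(T) = {x ∈ C : ‖x - Tx‖ ≤ ε}. Then for every ε > 0 there exists δ > 0 such that the closed convex hull of F_δ(T) translated by any vector of norm at most 2δ lies in F_ε(T); that is, co̅(F_δ(T)) + 2B_δ ⊆ F_ε(T), where the sum is taken inside C (for points of the sum lying in C). -/

import Mathlib

open Metric Pointwise

lemma aux_eq {H : Type*} [NormedAddCommGroup H] [InnerProductSpace ℝ H]
    (u v : H) (a b : ℝ) (ha : 0 ≤ a) (hb : 0 ≤ b) (hab : a + b = 1)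
    (h1 : ‖u‖ ≤ b * ‖v‖) (h2 : ‖u - v‖ ≤ a * ‖v‖) : u = b • v := by
  have key : ‖u - b • v‖ ^ 2 ≤ 0 := by
    have e1 : ‖u - v‖ ^ 2 = ‖u‖ ^ 2 - 2 * inner ℝ u v + ‖v‖ ^ 2 :=
      norm_sub_sq_real u v
    have e2 : ‖u - b • v‖ ^ 2 = ‖u‖ ^ 2 - 2 * (b * inner ℝ u v) + b ^ 2 * ‖v‖ ^ 2 := by
      rw [norm_sub_sq_real, real_inner_smul_right, norm_smul, Real.norm_eq_abs,
        abs_of_nonneg hb]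
      ring
    have q1 : ‖u‖ ^ 2 ≤ b ^ 2 * ‖v‖ ^ 2 := by
      have := norm_nonneg u
      nlinarith
    have q2 : ‖u - v‖ ^ 2 ≤ a ^ 2 * ‖v‖ ^ 2 := by
      have := norm_nonneg (u - v)
      nlinarith
    have h3 : ‖u‖ ^ 2 + ‖v‖ ^ 2 - a ^ 2 * ‖v‖ ^ 2 ≤ 2 * inner ℝ u v := by linarith
    have h4 : b * (‖u‖ ^ 2 + ‖v‖ ^ 2 - a ^ 2 * ‖v‖ ^ 2) ≤ b * (2 * inner ℝ u v) :=
      mul_le_mul_of_nonneg_left h3 hb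
    have h5 : a * ‖u‖ ^ 2 ≤ a * (b ^ 2 * ‖v‖ ^ 2) := mul_le_mul_of_nonneg_left q1 ha
    have hA : a = 1 - b := by linarith
    subst hA
    rw [e2]
    nlinarith [h4, h5]
  have h0 : ‖u - b • v‖ = 0 := by nlinarith [norm_nonneg (u - b • v)]
  exact sub_eq_zero.mp (norm_eq_zero.mp h0)

theorem stmt_8 {H : Type*} [NormedAddCommGroup H] [InnerProductSpace ℝ H]
    (C : Set H) (hC : C.Nonempty) (hCc : IsCompact C) (hCv : Convex ℝ C)
    (T : H → H) (hT : Set.MapsTo T C C)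
    (hTne : ∀ x ∈ C, ∀ y ∈ C, ‖T x - T y‖ ≤ ‖x - y‖) :
    ∀ ε : ℝ, 0 < ε → ∃ δ : ℝ, 0 < δ ∧
      ∀ y ∈ closure (convexHull ℝ {x | x ∈ C ∧ ‖x - T x‖ ≤ δ}),
        ∀ b : H, ‖b‖ < 2 * δ → y + b ∈ C → ‖(y + b) - T (y + b)‖ ≤ ε := by
  intro ε hε
  set Fix : Set H := {x | x ∈ C ∧ T x = x} with hFix
  -- Fix is convex
  have hFixConv : Convex ℝ Fix := by
    intro p hp q hq a b ha hb hab
    have hmC : a • p + b • q ∈ C := hCv hp.1 hq.1 ha hb hab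
    refine ⟨hmC, ?_⟩
    set m := a • p + b • q with hm
    have hmp : m - p = b • (q - p) := by
      rw [hm, smul_sub]
      rw [show a = 1 - b from by linarith]
      module
    have hmq : m - q = a • (p - q) := by
      rw [hm, smul_sub]
      rw [show b = 1 - a from by linarith]
      module
    have h1 : ‖T m - p‖ ≤ b * ‖q - p‖ := by
      have := hTne m hmC p hp.1
      rw [hp.2] at this
      calc ‖T m - p‖ ≤ ‖m - p‖ := this
        _ = b * ‖q - p‖ := by rw [hmp, norm_smul, Real.norm_eq_abs, abs_of_nonneg hb]
    have h2 : ‖T m - q‖ ≤ a * ‖q - p‖ := by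
      have := hTne m hmC q hq.1
      rw [hq.2] at this
      calc ‖T m - q‖ ≤ ‖m - q‖ := this
        _ = a * ‖q - p‖ := by
          rw [hmq, norm_smul, Real.norm_eq_abs, abs_of_nonneg ha, norm_sub_rev]
    have key : T m - p = b • (q - p) := by
      refine aux_eq (T m - p) (q - p) a b ha hb hab h1 ?_
      have : T m - p - (q - p) = T m - q := by abel
      rw [this]
      exact h2
    have : T m = m := by
      have := key
      rw [← hmp] at this
      have h := sub_left_injective this
      exact h
    exact this
  -- Fix is closed, hence compact
  have hCclosed : IsClosed C := hCc.isClosed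
  have hFixClosed : IsClosed Fix := by
    rw [← isSeqClosed_iff_isClosed]
    intro x p hx hxp
    have hpC : p ∈ C := hCclosed.isSeqClosed (fun n => (hx n).1) hxp
    refine ⟨hpC, ?_⟩
    have hbound : ∀ n, ‖p - T p‖ ≤ 2 * ‖p - x n‖ := by
      intro n
      have h1 : ‖T (x n) - T p‖ ≤ ‖x n - p‖ := hTne _ (hx n).1 _ hpC
      calc ‖p - T p‖ ≤ ‖p - x n‖ + ‖x n - T p‖ := norm_sub_le_norm_sub_add_norm_sub _ _ _
        _ = ‖p - x n‖ + ‖T (x n) - T p‖ := by rw [(hx n).2]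
        _ ≤ ‖p - x n‖ + ‖x n - p‖ := by linarith
        _ = 2 * ‖p - x n‖ := by rw [norm_sub_rev p]; ring
    have htend : Filter.Tendsto (fun n => 2 * ‖p - x n‖) Filter.atTop (nhds 0) := by
      have : Filter.Tendsto (fun n => ‖p - x n‖) Filter.atTop (nhds 0) := by
        simpa [dist_eq_norm, norm_sub_rev] using tendsto_iff_dist_tendsto_zero.mp hxp
      simpa using this.const_mul 2
    have : ‖p - T p‖ ≤ 0 := le_of_tendsto_of_tendsto' tendsto_const_nhds htend hbound
    have : p - T p = 0 := norm_le_zero_iff.mp this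
    exact (sub_eq_zero.mp this).symm
  have hFixCompact : IsCompact Fix := hCc.of_isClosed_subset hFixClosed (fun x hx => hx.1)
  -- approach lemma
  have approach : ∀ η : ℝ, 0 < η → ∃ δ : ℝ, 0 < δ ∧
      ∀ x ∈ C, ‖x - T x‖ ≤ δ → ∃ p ∈ Fix, ‖x - p‖ < η := by
    intro η hη
    by_contra hcon
    push_neg at hcon
    have hseq : ∀ n : ℕ, ∃ x ∈ C, ‖x - T x‖ ≤ 1 / (n + 1) ∧ ∀ p ∈ Fix, η ≤ ‖x - p‖ := by
      intro n
      obtain ⟨x, hxC, hxd, hxfar⟩ := hcon (1 / (n + 1)) (by positivity)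
      exact ⟨x, hxC, hxd, hxfar⟩
    choose x hxC hxd hxfar using hseq
    obtain ⟨p, hpC, φ, hφ, hconv⟩ := hCc.tendsto_subseq hxC
    have hpFix : p ∈ Fix := by
      refine ⟨hpC, ?_⟩
      have hbound : ∀ n, ‖p - T p‖ ≤ 2 * ‖p - x (φ n)‖ + 1 / (φ n + 1) := by
        intro n
        have h1 : ‖T (x (φ n)) - T p‖ ≤ ‖x (φ n) - p‖ := hTne _ (hxC _) _ hpC
        calc ‖p - T p‖ ≤ ‖p - x (φ n)‖ + ‖x (φ n) - T p‖ :=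
              norm_sub_le_norm_sub_add_norm_sub _ _ _
          _ ≤ ‖p - x (φ n)‖ + ‖x (φ n) - T (x (φ n))‖ + ‖T (x (φ n)) - T p‖ := by
              have := norm_sub_le_norm_sub_add_norm_sub (x (φ n)) (T (x (φ n))) (T p)
              linarith
          _ ≤ ‖p - x (φ n)‖ + 1 / (φ n + 1) + ‖x (φ n) - p‖ := by
              have := hxd (φ n); linarith
          _ = 2 * ‖p - x (φ n)‖ + 1 / (φ n + 1) := by rw [norm_sub_rev (x (φ n))]; ring
      have htend : Filter.Tendsto (fun n => 2 * ‖p - x (φ n)‖ + 1 / ((φ n : ℝ) + 1))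
          Filter.atTop (nhds 0) := by
        have t1 : Filter.Tendsto (fun n => ‖p - x (φ n)‖) Filter.atTop (nhds 0) := by
          simpa [dist_eq_norm, norm_sub_rev] using tendsto_iff_dist_tendsto_zero.mp hconv
        have t2 : Filter.Tendsto (fun n : ℕ => 1 / ((φ n : ℝ) + 1)) Filter.atTop (nhds 0) := by
          have : Filter.Tendsto (fun n : ℕ => 1 / ((n : ℝ) + 1)) Filter.atTop (nhds 0) :=
            tendsto_one_div_add_atTop_nhds_zero_nat
          exact this.comp hφ.tendsto_atTop
        have := (t1.const_mul 2).add t2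
        simpa using this
      have : ‖p - T p‖ ≤ 0 := le_of_tendsto_of_tendsto' tendsto_const_nhds htend hbound
      have : p - T p = 0 := norm_le_zero_iff.mp this
      exact (sub_eq_zero.mp this).symm
    have hfar : ∀ n, η ≤ ‖x (φ n) - p‖ := fun n => hxfar (φ n) p hpFix
    have t1 : Filter.Tendsto (fun n => ‖x (φ n) - p‖) Filter.atTop (nhds 0) := by
      simpa [dist_eq_norm] using tendsto_iff_dist_tendsto_zero.mp hconv
    have : η ≤ 0 := le_of_tendsto_of_tendsto' tendsto_const_nhds t1 (fun n => hfar n)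
    linarith
  -- main argument
  obtain ⟨δ₁, hδ₁, hδ₁prop⟩ := approach (ε / 4) (by linarith)
  refine ⟨min δ₁ (ε / 8), lt_min hδ₁ (by linarith), ?_⟩
  intro y hy b hb hybC
  set δ := min δ₁ (ε / 8) with hδ
  set K : Set H := Fix + Metric.closedBall (0 : H) (ε / 4) with hK
  have hKclosed : IsClosed K := IsClosed.add_left_of_isCompact
    Metric.isClosed_closedBall hFixCompact
  have hKconv : Convex ℝ K := hFixConv.add (convex_closedBall (0 : H) (ε / 4))
  have hsub : {x | x ∈ C ∧ ‖x - T x‖ ≤ δ} ⊆ K := by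
    intro x hx
    obtain ⟨p, hpFix, hxp⟩ := hδ₁prop x hx.1 (le_trans hx.2 (min_le_left _ _))
    exact ⟨p, hpFix, x - p, by
      simp only [Metric.mem_closedBall, dist_zero_right]
      linarith, by module⟩
  have hyK : y ∈ K := by
    have : closure (convexHull ℝ {x | x ∈ C ∧ ‖x - T x‖ ≤ δ}) ⊆ K :=
      closure_minimal (convexHull_min hsub hKconv) hKclosed
    exact this hy
  obtain ⟨p, hpFix, w, hw, hyw⟩ := hyK
  simp only [Metric.mem_closedBall, dist_zero_right] at hw
  have hzp : ‖(y + b) - p‖ ≤ ε / 2 := by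
    have : (y + b) - p = w + b := by rw [← hyw]; show p + w + b - p = w + b; abel
    rw [this]
    have hb' : ‖b‖ < ε / 4 := by
      have : 2 * δ ≤ 2 * (ε / 8) := by
        have := min_le_right δ₁ (ε / 8)
        linarith
      calc ‖b‖ < 2 * δ := hb
        _ ≤ ε / 4 := by linarith
    calc ‖w + b‖ ≤ ‖w‖ + ‖b‖ := norm_add_le _ _
      _ ≤ ε / 2 := by linarith
  have h1 : ‖T p - T (y + b)‖ ≤ ‖p - (y + b)‖ := hTne _ hpFix.1 _ hybC
  calc ‖(y + b) - T (y + b)‖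
      ≤ ‖(y + b) - p‖ + ‖p - T (y + b)‖ := norm_sub_le_norm_sub_add_norm_sub _ _ _
    _ = ‖(y + b) - p‖ + ‖T p - T (y + b)‖ := by rw [hpFix.2]
    _ ≤ ‖(y + b) - p‖ + ‖p - (y + b)‖ := by linarith
    _ = 2 * ‖(y + b) - p‖ := by rw [norm_sub_rev p]; ring
    _ ≤ ε := by linarith
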